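/- Conditions (1)–(3) together with: N(a_i) ≤ δ^{1/2} for all i and no rational integer n ≥ 2 divides a_i a_j for i ≠ j, imply condition (4): if a_i a_j − c² is totally positive for c ∈ O_K, then c = 0. -/

import Mathlib

def qmul (w0 w1 : ℤ) (p q : ℤ × ℤ) : ℤ × ℤ :=
  (p.1 * q.1 + w0 * (p.2 * q.2), p.1 * q.2 + p.2 * q.1 + w1 * (p.2 * q.2))

def qconj (w1 : ℤ) (p : ℤ × ℤ) : ℤ × ℤ := (p.1 + w1 * p.2, -p.2)

lemma emb_qmul (w0 w1 : ℤ) (τ : ℝ) (hτ : τ ^ 2 = (w0 : ℝ) + (w1 : ℝ) * τ) (p q : ℤ × ℤ) :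
    (((qmul w0 w1 p q).1 : ℝ) + ((qmul w0 w1 p q).2 : ℝ) * τ)
      = ((p.1 : ℝ) + (p.2 : ℝ) * τ) * ((q.1 : ℝ) + (q.2 : ℝ) * τ) := by
  simp only [qmul]
  push_cast
  linear_combination (-(p.2 : ℝ) * (q.2 : ℝ)) * hτ

lemma emb_qconj (w1 : ℤ) (τ τ' : ℝ) (hsum : (w1 : ℝ) = τ + τ') (p : ℤ × ℤ) :
    (((qconj w1 p).1 : ℝ) + ((qconj w1 p).2 : ℝ) * τ) = (p.1 : ℝ) + (p.2 : ℝ) * τ' := by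
  simp only [qconj]
  push_cast
  linear_combination (p.2 : ℝ) * hsum

lemma pair_inj {ω ω' : ℝ} (hne : ω ≠ ω') {x1 x2 y1 y2 : ℤ}
    (h : (x1 : ℝ) + (x2 : ℝ) * ω = (y1 : ℝ) + (y2 : ℝ) * ω)
    (h' : (x1 : ℝ) + (x2 : ℝ) * ω' = (y1 : ℝ) + (y2 : ℝ) * ω') : x1 = y1 ∧ x2 = y2 := by
  have h2 : ((x2 : ℝ) - y2) * (ω - ω') = 0 := by linear_combination h - h'
  have hx2 : x2 = y2 := by
    rcases mul_eq_zero.mp h2 with h3 | h3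
    · exact_mod_cast sub_eq_zero.mp h3
    · exact absurd (sub_eq_zero.mp h3) hne
  refine ⟨?_, hx2⟩
  have hx2r : (x2 : ℝ) = y2 := by exact_mod_cast hx2
  have : (x1 : ℝ) = y1 := by
    rw [hx2r] at h; linarith
  exact_mod_cast this

set_option maxHeartbeats 1000000 in
/-- Conditions (1)-(3) of Proposition 4 together with `N(a i) ≤ δ^{1/2}` and
`n ∤ a i * a j` for all rational integers `n ≥ 2` and `i ≠ j` imply condition (4):
if `a i * a j - c²` is totally positive for some `c ∈ O_K`, then `c = 0`. -/
theorem stmt4 (D : ℕ) (hD : Squarefree D) (hD1 : 1 < D) (M : ℕ) (hM : 0 < M)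
    (ω ω' δ : ℝ)
    (hω : ω = if D % 4 = 1 then (1 + Real.sqrt D) / 2 else Real.sqrt D)
    (hω' : ω' = if D % 4 = 1 then (1 - Real.sqrt D) / 2 else -Real.sqrt D)
    (hδ : δ = if D % 4 = 1 then Real.sqrt D else 2 * Real.sqrt D)
    (emb emb' : ℤ × ℤ → ℝ)
    (hemb : ∀ p, emb p = (p.1 : ℝ) + (p.2 : ℝ) * ω)
    (hemb' : ∀ p, emb' p = (p.1 : ℝ) + (p.2 : ℝ) * ω')
    (a : Fin M → ℤ × ℤ) (ha1 : a ⟨0, hM⟩ = (1, 0))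
    (hpos : ∀ i, 0 < emb (a i) ∧ 0 < emb' (a i))
    (h1 : ∀ i, emb (a i) * emb' (a i) ≤ δ)
    (h2 : ∀ i, ∀ z : ℤ, 2 ≤ z → ¬(z ∣ (a i).1 ∧ z ∣ (a i).2))
    (h3 : ∀ i j, i ≠ j → ¬∃ x : ℤ × ℤ, emb (a i) = emb (a j) * (emb x) ^ 2)
    (h5a : ∀ i, emb (a i) * emb' (a i) ≤ Real.sqrt δ)
    (h5b : ∀ i j, i ≠ j → ∀ z : ℤ, 2 ≤ z →
      ¬∃ β : ℤ × ℤ, emb (a i) * emb (a j) = (z : ℝ) * emb β ∧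
        emb' (a i) * emb' (a j) = (z : ℝ) * emb' β) :
    ∀ i j, i ≠ j → ∀ c : ℤ × ℤ,
      0 < emb (a i) * emb (a j) - (emb c) ^ 2 →
      0 < emb' (a i) * emb' (a j) - (emb' c) ^ 2 → c = 0 := by
  intro i j hij c hci hcj
  by_contra hc0
  have hD0 : (0 : ℝ) < D := by exact_mod_cast Nat.pos_of_ne_zero (by omega)
  have hsq : Real.sqrt D ^ 2 = (D : ℝ) := Real.sq_sqrt hD0.le
  have hs0 : 0 < Real.sqrt D := Real.sqrt_pos.mpr hD0
  have hNS : ¬ IsSquare D := by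
    rintro ⟨e, he⟩
    have : IsUnit e := hD e (by rw [he])
    rw [Nat.isUnit_iff] at this
    rw [this] at he
    omega
  have hsI : Irrational (Real.sqrt D) := irrational_sqrt_natCast_iff.mpr hNS
  have hδ0 : 0 < δ := by
    rw [hδ]; split_ifs
    · exact hs0
    · linarith only [hs0]
  obtain ⟨w0, w1, hsum, hprod, hdd, hωI, hω'I⟩ :
      ∃ w0 w1 : ℤ, ((w1 : ℝ) = ω + ω') ∧ ((w0 : ℝ) = -(ω * ω')) ∧ (ω - ω' = δ)
        ∧ Irrational ω ∧ Irrational ω' := by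
    by_cases h4 : D % 4 = 1
    · obtain ⟨m, hm⟩ : (4 : ℤ) ∣ (D : ℤ) - 1 := by omega
      refine ⟨m, 1, ?_, ?_, ?_, ?_, ?_⟩
      · rw [hω, hω', if_pos h4, if_pos h4]; push_cast; ring
      · rw [hω, hω', if_pos h4, if_pos h4]
        have hmr : (D : ℝ) - 1 = 4 * (m : ℝ) := by exact_mod_cast hm
        linear_combination (-1/4 : ℝ) * hmr - (1/4 : ℝ) * hsq
      · rw [hω, hω', hδ, if_pos h4, if_pos h4, if_pos h4]; ring
      · rw [hω, if_pos h4]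
        have h1' : Irrational ((1 : ℚ) + Real.sqrt D) := hsI.ratCast_add (q := 1)
        have h2' := h1'.div_intCast (m := 2) (by norm_num)
        convert h2' using 1
        push_cast; ring
      · rw [hω', if_pos h4]
        have h1' : Irrational ((1 : ℚ) + -Real.sqrt D) := hsI.neg.ratCast_add (q := 1)
        have h2' := h1'.div_intCast (m := 2) (by norm_num)
        convert h2' using 1
        push_cast; ring
    · refine ⟨(D : ℤ), 0, ?_, ?_, ?_, ?_, ?_⟩
      · rw [hω, hω', if_neg h4, if_neg h4]; push_cast; ring
      · rw [hω, hω', if_neg h4, if_neg h4]; push_cast; linear_combination (-1 : ℝ) * hsq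
      · rw [hω, hω', hδ, if_neg h4, if_neg h4, if_neg h4]; ring
      · rw [hω, if_neg h4]; exact hsI
      · rw [hω', if_neg h4]; exact hsI.neg
  have hne : ω ≠ ω' := by
    intro h
    rw [h, sub_self] at hdd
    exact hδ0.ne' hdd.symm
  have hτ : ω ^ 2 = (w0 : ℝ) + (w1 : ℝ) * ω := by linear_combination (-ω) * hsum - hprod
  have hτ' : ω' ^ 2 = (w0 : ℝ) + (w1 : ℝ) * ω' := by linear_combination (-ω') * hsum - hprod
  have hsum' : (w1 : ℝ) = ω' + ω := by rw [hsum]; ring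
  -- nonvanishing of embeddings of c
  have hgne : ∀ t : ℝ, Irrational t → (c.1 : ℝ) + (c.2 : ℝ) * t ≠ 0 := by
    intro t ht h0
    rcases eq_or_ne c.2 0 with h2' | h2'
    · apply hc0
      have h1' : (c.1 : ℝ) = 0 := by rw [h2'] at h0; push_cast at h0; linarith only [h0]
      have hc1 : c.1 = 0 := by exact_mod_cast h1'
      exact Prod.ext_iff.mpr ⟨by simpa using hc1, by simpa using h2'⟩
    · apply ht
      refine ⟨(-c.1 : ℚ) / (c.2 : ℚ), ?_⟩
      have hc2r : ((c.2 : ℤ) : ℝ) ≠ 0 := Int.cast_ne_zero.mpr h2'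
      push_cast
      rw [div_eq_iff hc2r]
      linarith only [h0]
  set A := emb (a i) * emb (a j) with hAdef
  set B := emb' (a i) * emb' (a j) with hBdef
  set g := emb c with hgdef
  set g' := emb' c with hg'def
  clear_value A B g g'
  have hg : g ≠ 0 := by rw [hgdef, hemb]; exact hgne ω hωI
  have hg' : g' ≠ 0 := by rw [hg'def, hemb']; exact hgne ω' hω'I
  have hA0 : 0 < A := by rw [hAdef]; exact mul_pos (hpos i).1 (hpos j).1
  have hB0 : 0 < B := by rw [hBdef]; exact mul_pos (hpos i).2 (hpos j).2
  have hgA : g ^ 2 < A := by linarith only [hci]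
  have hg'B : g' ^ 2 < B := by linarith only [hcj]
  have hg2 : 0 < g ^ 2 := (sq_nonneg g).lt_of_ne (Ne.symm (pow_ne_zero 2 hg))
  have hg'2 : 0 < g' ^ 2 := (sq_nonneg g').lt_of_ne (Ne.symm (pow_ne_zero 2 hg'))
  -- the product element β and c², ζ
  set β : ℤ × ℤ := qmul w0 w1 (a i) (a j) with hβdef
  set c2 : ℤ × ℤ := qmul w0 w1 c c with hc2def
  set ζ : ℤ × ℤ := qmul w0 w1 β (qconj w1 c2) with hζdef
  clear_value β c2 ζ
  have hembβ : (β.1 : ℝ) + (β.2 : ℝ) * ω = A := by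
    rw [hβdef, hAdef, hemb, hemb]; exact emb_qmul w0 w1 ω hτ (a i) (a j)
  have hembβ' : (β.1 : ℝ) + (β.2 : ℝ) * ω' = B := by
    rw [hβdef, hBdef, hemb', hemb']; exact emb_qmul w0 w1 ω' hτ' (a i) (a j)
  have hc2ω : (c2.1 : ℝ) + (c2.2 : ℝ) * ω = g ^ 2 := by
    rw [hc2def, hgdef, hemb, sq]; exact emb_qmul w0 w1 ω hτ c c
  have hc2ω' : (c2.1 : ℝ) + (c2.2 : ℝ) * ω' = g' ^ 2 := by
    rw [hc2def, hg'def, hemb', sq]; exact emb_qmul w0 w1 ω' hτ' c c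
  have hζω : (ζ.1 : ℝ) + (ζ.2 : ℝ) * ω = A * g' ^ 2 := by
    rw [hζdef, emb_qmul w0 w1 ω hτ, emb_qconj w1 ω ω' hsum, hembβ, hc2ω']
  have hζω' : (ζ.1 : ℝ) + (ζ.2 : ℝ) * ω' = B * g ^ 2 := by
    rw [hζdef, emb_qmul w0 w1 ω' hτ', emb_qconj w1 ω' ω hsum', hembβ', hc2ω]
  -- the integer norms
  set N : ℤ := β.1 ^ 2 + w1 * (β.1 * β.2) - w0 * β.2 ^ 2 with hNdef
  set n : ℤ := c.1 ^ 2 + w1 * (c.1 * c.2) - w0 * c.2 ^ 2 with hndef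
  clear_value N n
  have hNr : (N : ℝ) = A * B := by
    rw [← hembβ, ← hembβ', hNdef]
    push_cast
    linear_combination ((β.1 : ℝ) * (β.2 : ℝ)) * hsum - ((β.2 : ℝ) ^ 2) * hprod
  have hnr : (n : ℝ) = g * g' := by
    rw [hgdef, hg'def, hemb, hemb', hndef]
    push_cast
    linear_combination ((c.1 : ℝ) * (c.2 : ℝ)) * hsum - ((c.2 : ℝ) ^ 2) * hprod
  have hn0 : n ≠ 0 := by
    intro h
    rw [h] at hnr
    exact mul_ne_zero hg hg' (by exact_mod_cast hnr.symm)
  have hn2r : (n : ℝ) ^ 2 = g ^ 2 * g' ^ 2 := by rw [hnr]; ring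
  have hn1 : 1 ≤ n ^ 2 := by rcases hn0.lt_or_gt with h | h <;> nlinarith only [h]
  have hn1r : (1 : ℝ) ≤ (n : ℝ) ^ 2 := by exact_mod_cast hn1
  have hNδ : (N : ℝ) ≤ δ := by
    rw [hNr, hAdef, hBdef]
    nlinarith only [h5a i, h5a j, Real.mul_self_sqrt hδ0.le, Real.sqrt_nonneg δ,
      mul_pos (hpos i).1 (hpos i).2, mul_pos (hpos j).1 (hpos j).2]
  -- bounds on ζ
  have hl1 : (n : ℝ) ^ 2 < A * g' ^ 2 := by nlinarith only [hn2r, hgA, hg'2]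
  have hl2 : A * g' ^ 2 < (N : ℝ) := by rw [hNr]; exact mul_lt_mul_of_pos_left hg'B hA0
  have hl3 : (n : ℝ) ^ 2 < B * g ^ 2 := by nlinarith only [hn2r, hg'B, hg2]
  have hl4 : B * g ^ 2 < (N : ℝ) := by
    rw [hNr]
    calc B * g ^ 2 < B * A := mul_lt_mul_of_pos_left hgA hB0
    _ = A * B := by ring
  have hζ2 : ζ.2 = 0 := by
    have hdiffeq : (ζ.2 : ℝ) * δ = A * g' ^ 2 - B * g ^ 2 := by
      linear_combination hζω - hζω' - (ζ.2 : ℝ) * hdd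
    have hb1 : (ζ.2 : ℝ) * δ < 1 * δ := by
      rw [one_mul]; linarith only [hdiffeq, hl2, hl3, hNδ, hn1r]
    have hb2 : (-1 : ℝ) * δ < (ζ.2 : ℝ) * δ := by
      rw [neg_one_mul]; linarith only [hdiffeq, hl1, hl4, hNδ, hn1r]
    have hu : (ζ.2 : ℝ) < 1 := lt_of_mul_lt_mul_right hb1 hδ0.le
    have hlo : (-1 : ℝ) < (ζ.2 : ℝ) := lt_of_mul_lt_mul_right hb2 hδ0.le
    have hu' : ζ.2 < 1 := by exact_mod_cast hu
    have hlo' : -1 < ζ.2 := by exact_mod_cast hlo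
    omega
  set P : ℤ := ζ.1 with hPdef
  clear_value P
  have hPA : (P : ℝ) = A * g' ^ 2 := by
    have := hζω; rw [hζ2] at this; push_cast at this; linarith only [this]
  have hPB : (P : ℝ) = B * g ^ 2 := by
    have := hζω'; rw [hζ2] at this; push_cast at this; linarith only [this]
  have hPn : n ^ 2 < P := by
    have : ((n : ℝ)) ^ 2 < (P : ℝ) := by rw [hPA]; exact hl1
    exact_mod_cast this
  have hPN : P < N := by
    have : (P : ℝ) < (N : ℝ) := by rw [hPA]; exact hl2
    exact_mod_cast this
  have hPsq : P ^ 2 = N * n ^ 2 := by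
    have hr : ((P : ℝ)) ^ 2 = (N : ℝ) * (n : ℝ) ^ 2 := by
      rw [hNr, hn2r]
      linear_combination (P : ℝ) * hPB + (B * g ^ 2) * hPA
    exact_mod_cast hr
  have hdvd : n ∣ P :=
    (IsIntegrallyClosed.pow_dvd_pow_iff (by norm_num : (2 : ℕ) ≠ 0)).mp
      ⟨N, by rw [hPsq]; ring⟩
  obtain ⟨k, hk⟩ := hdvd
  have habs : |n| < |k| := by
    have h1' : n ^ 2 < |n| * |k| := by
      calc n ^ 2 < P := hPn
      _ = n * k := hk
      _ ≤ |n * k| := le_abs_self _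
      _ = |n| * |k| := abs_mul n k
    have h2' : |n| * |n| < |n| * |k| := by nlinarith only [h1', sq_abs n]
    exact lt_of_mul_lt_mul_left h2' (abs_nonneg n)
  -- the identity n²·β = P·c2
  have eqω : ((n ^ 2 * β.1 : ℤ) : ℝ) + ((n ^ 2 * β.2 : ℤ) : ℝ) * ω
      = ((P * c2.1 : ℤ) : ℝ) + ((P * c2.2 : ℤ) : ℝ) * ω := by
    push_cast
    linear_combination ((n : ℝ) ^ 2) * hembβ - (P : ℝ) * hc2ω - g ^ 2 * hPA
      + (A * ((n : ℝ) + g * g')) * hnr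
  have eqω' : ((n ^ 2 * β.1 : ℤ) : ℝ) + ((n ^ 2 * β.2 : ℤ) : ℝ) * ω'
      = ((P * c2.1 : ℤ) : ℝ) + ((P * c2.2 : ℤ) : ℝ) * ω' := by
    push_cast
    linear_combination ((n : ℝ) ^ 2) * hembβ' - (P : ℝ) * hc2ω' - g' ^ 2 * hPB
      + (B * ((n : ℝ) + g * g')) * hnr
  obtain ⟨e1, e2⟩ := pair_inj hne eqω eqω'
  have f1 : n * β.1 = k * c2.1 :=
    mul_left_cancel₀ hn0 (by linear_combination e1 + c2.1 * hk)
  have f2 : n * β.2 = k * c2.2 :=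
    mul_left_cancel₀ hn0 (by linear_combination e2 + c2.2 * hk)
  -- extract a divisor ≥ 2 of β
  set d : ℤ := (Int.gcd n k : ℤ) with hddef
  have hdpos : 0 < Int.gcd n k :=
    Nat.pos_of_ne_zero (fun h => hn0 (Int.gcd_eq_zero_iff.mp h).1)
  have hd0 : d ≠ 0 := by
    rw [hddef]
    exact_mod_cast Nat.pos_iff_ne_zero.mp hdpos
  set n₁ : ℤ := n / d with hn₁def
  set k₁ : ℤ := k / d with hk₁def
  have hcop : Int.gcd n₁ k₁ = 1 := Int.gcd_div_gcd_div_gcd hdpos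
  have hn₁ : n₁ * d = n := Int.ediv_mul_cancel (Int.gcd_dvd_left n k)
  have hk₁ : k₁ * d = k := Int.ediv_mul_cancel (Int.gcd_dvd_right n k)
  clear_value d n₁ k₁
  have g1 : n₁ * β.1 = k₁ * c2.1 := by
    apply mul_left_cancel₀ hd0
    linear_combination f1 + β.1 * hn₁ - c2.1 * hk₁
  have g2 : n₁ * β.2 = k₁ * c2.2 := by
    apply mul_left_cancel₀ hd0
    linear_combination f2 + β.2 * hn₁ - c2.2 * hk₁
  have hk₁b1 : k₁ ∣ β.1 :=
    Int.dvd_of_dvd_mul_right_of_gcd_one (g1 ▸ dvd_mul_right k₁ c2.1)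
      (by rw [Int.gcd_comm]; exact hcop)
  have hk₁b2 : k₁ ∣ β.2 :=
    Int.dvd_of_dvd_mul_right_of_gcd_one (g2 ▸ dvd_mul_right k₁ c2.2)
      (by rw [Int.gcd_comm]; exact hcop)
  have hdn : d ≤ |n| := by
    rw [hddef]
    exact Int.le_of_dvd (abs_pos.mpr hn0) ((dvd_abs _ _).mpr (Int.gcd_dvd_left n k))
  have hdpos' : 0 < d := by
    rw [hddef]; exact_mod_cast hdpos
  have hkabs : |k₁| * d = |k| := by
    rw [← hk₁, abs_mul, abs_of_pos hdpos']
  have hk₁2 : 2 ≤ |k₁| := by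
    by_contra hcon
    push_neg at hcon
    have h0 : 0 ≤ |k₁| := abs_nonneg k₁
    have h1' : |k₁| ≤ 1 := by omega
    nlinarith only [hkabs, h1', hdn, habs, hdpos', h0]
  obtain ⟨b1, hb1⟩ : |k₁| ∣ β.1 := (abs_dvd _ _).mpr hk₁b1
  obtain ⟨b2, hb2⟩ : |k₁| ∣ β.2 := (abs_dvd _ _).mpr hk₁b2
  have hb1r : (β.1 : ℝ) = (|k₁| : ℝ) * (b1 : ℝ) := by exact_mod_cast congrArg Int.cast hb1
  have hb2r : (β.2 : ℝ) = (|k₁| : ℝ) * (b2 : ℝ) := by exact_mod_cast congrArg Int.cast hb2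
  refine h5b i j hij |k₁| hk₁2 ⟨(b1, b2), ?_, ?_⟩
  · rw [← hAdef, hemb]
    push_cast
    linear_combination (-1 : ℝ) * hembβ + hb1r + ω * hb2r
  · rw [← hBdef, hemb']
    push_cast
    linear_combination (-1 : ℝ) * hembβ' + hb1r + ω' * hb2r
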